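/- The union over finitely many η_i ∈ [0, π/2], pairwise separated by at least 2 arcsin(d/2), of product codes C_{1,i} × C_{2,i} scaled onto the leaves T_{η_i}, each with minimum distance at least d, is a spherical code in S^{2n-1} with minimum distance at least d, and its cardinality is Σ_i |C_{1,i}|·|C_{2,i}|. -/

import Mathlib

open Real

noncomputable def concat {n : ℕ} (a b : EuclideanSpace ℝ (Fin n)) :
    WithLp 2 (EuclideanSpace ℝ (Fin n) × EuclideanSpace ℝ (Fin n)) :=
  (WithLp.equiv 2 (EuclideanSpace ℝ (Fin n) × EuclideanSpace ℝ (Fin n))).symm (a, b)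

lemma dist_concat {n : ℕ} (a b c e : EuclideanSpace ℝ (Fin n)) :
    dist (concat a b) (concat c e) = √(dist a c ^ 2 + dist b e ^ 2) :=
  WithLp.prod_dist_eq_of_L2 _ _

lemma norm_concat {n : ℕ} (a b : EuclideanSpace ℝ (Fin n)) :
    ‖concat a b‖ = √(‖a‖ ^ 2 + ‖b‖ ^ 2) :=
  WithLp.prod_norm_eq_of_L2 _

set_option maxHeartbeats 1000000 in
/-- Cross-leaf distance bound. -/
lemma cross_leaf {n : ℕ} {d : ℝ} (hd : d ∈ Set.Ioc 0 2) {a b : ℝ}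
    (ha : a ∈ Set.Icc 0 (π / 2)) (hb : b ∈ Set.Icc 0 (π / 2))
    (hsep : 2 * arcsin (d / 2) ≤ |a - b|)
    {v₁ v₂ w₁ w₂ : EuclideanSpace ℝ (Fin n)}
    (hv₁ : ‖v₁‖ = 1) (hv₂ : ‖v₂‖ = 1) (hw₁ : ‖w₁‖ = 1) (hw₂ : ‖w₂‖ = 1) :
    d ≤ dist (concat (cos a • v₁) (sin a • v₂)) (concat (cos b • w₁) (sin b • w₂)) := by
  obtain ⟨hd0, hd2⟩ := hd
  have hca : 0 ≤ cos a := Real.cos_nonneg_of_mem_Icc ⟨by linarith [ha.1, Real.pi_pos], ha.2⟩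
  have hcb : 0 ≤ cos b := Real.cos_nonneg_of_mem_Icc ⟨by linarith [hb.1, Real.pi_pos], hb.2⟩
  have hsa : 0 ≤ sin a := Real.sin_nonneg_of_nonneg_of_le_pi ha.1 (by linarith [ha.2, Real.pi_pos])
  have hsb : 0 ≤ sin b := Real.sin_nonneg_of_nonneg_of_le_pi hb.1 (by linarith [hb.2, Real.pi_pos])
  -- lower bounds on the two coordinate distances
  have key : ∀ (s t : ℝ), 0 ≤ s → 0 ≤ t → ∀ (u u' : EuclideanSpace ℝ (Fin n)),
      ‖u‖ = 1 → ‖u'‖ = 1 → |s - t| ≤ dist (s • u) (t • u') := by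
    intro s t hs ht u u' hu hu'
    have := abs_norm_sub_norm_le (s • u) (t • u')
    rw [norm_smul, norm_smul, hu, hu', mul_one, mul_one, Real.norm_eq_abs, Real.norm_eq_abs,
      abs_of_nonneg hs, abs_of_nonneg ht] at this
    simpa [dist_eq_norm] using this
  have h1 : |cos a - cos b| ≤ dist (cos a • v₁) (cos b • w₁) := key _ _ hca hcb _ _ hv₁ hw₁
  have h2 : |sin a - sin b| ≤ dist (sin a • v₂) (sin b • w₂) := key _ _ hsa hsb _ _ hv₂ hw₂
  -- cos (a - b) ≤ 1 - d^2/2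
  have hd2' : (0:ℝ) ≤ 1 - (d/2)^2 := by nlinarith
  have hcos2 : cos (2 * arcsin (d / 2)) = 1 - 2 * (d/2)^2 := by
    rw [Real.cos_two_mul, Real.cos_arcsin, Real.sq_sqrt hd2']
    ring
  have habs : |a - b| ≤ π := by
    rw [abs_sub_le_iff]
    constructor <;> nlinarith [ha.1, ha.2, hb.1, hb.2, Real.pi_pos]
  have harcsin : 0 ≤ 2 * arcsin (d / 2) := by
    have := Real.arcsin_nonneg.2 (by linarith : (0:ℝ) ≤ d / 2)
    linarith
  have hcosle : cos |a - b| ≤ 1 - 2 * (d/2)^2 := by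
    rw [← hcos2]
    exact Real.cos_le_cos_of_nonneg_of_le_pi harcsin habs hsep
  have hcosab : cos (a - b) ≤ 1 - d^2/2 := by
    have := Real.cos_abs (a - b)
    nlinarith
  -- combine
  have hpyth : cos a ^ 2 + sin a ^ 2 = 1 := by
    have := Real.sin_sq_add_cos_sq a; linarith
  have hpyth' : cos b ^ 2 + sin b ^ 2 = 1 := by
    have := Real.sin_sq_add_cos_sq b; linarith
  have hcs : cos (a - b) = cos a * cos b + sin a * sin b := Real.cos_sub a b
  have hexp : (cos a - cos b)^2 + (sin a - sin b)^2 = 2 - 2 * cos (a - b) := by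
    rw [hcs]; nlinarith [hpyth, hpyth']
  have hsum : d ^ 2 ≤ (cos a - cos b)^2 + (sin a - sin b)^2 := by
    rw [hexp]; nlinarith [hcosab]
  rw [dist_concat]
  rw [show d = √(d^2) from (Real.sqrt_sq hd0.le).symm]
  apply Real.sqrt_le_sqrt
  have q1 : (cos a - cos b)^2 ≤ dist (cos a • v₁) (cos b • w₁) ^ 2 := by
    rw [← sq_abs]
    exact pow_le_pow_left₀ (abs_nonneg _) h1 2
  have q2 : (sin a - sin b)^2 ≤ dist (sin a • v₂) (sin b • w₂) ^ 2 := by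
    rw [← sq_abs]
    exact pow_le_pow_left₀ (abs_nonneg _) h2 2
  linarith

/-- The union over finitely many leaves `T_{η_i}`, pairwise separated by at least
`2 arcsin(d/2)`, of scaled product codes each with minimum distance at least `d`, is a
spherical code in `S^{2n-1}` with minimum distance at least `d` and cardinality
`Σ_i |C₁ᵢ|·|C₂ᵢ|`. -/
theorem stmt10 (n : ℕ) (d : ℝ) (hd : d ∈ Set.Ioc 0 2) (ι : Type) [Fintype ι]
    (η : ι → ℝ) (hη : ∀ i, η i ∈ Set.Icc 0 (π / 2))
    (hsep : ∀ i j, i ≠ j → 2 * arcsin (d / 2) ≤ |η i - η j|)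
    (C₁ C₂ : ι → Finset (EuclideanSpace ℝ (Fin n)))
    (hC₁ : ∀ i, ∀ v ∈ C₁ i, ‖v‖ = 1) (hC₂ : ∀ i, ∀ v ∈ C₂ i, ‖v‖ = 1)
    (hleaf : ∀ i, ∀ v₁ ∈ C₁ i, ∀ v₂ ∈ C₂ i, ∀ w₁ ∈ C₁ i, ∀ w₂ ∈ C₂ i,
      (v₁, v₂) ≠ (w₁, w₂) →
      d ≤ dist (concat (cos (η i) • v₁) (sin (η i) • v₂))
               (concat (cos (η i) • w₁) (sin (η i) • w₂))) :
    (∀ x ∈ {x | ∃ i, ∃ v₁ ∈ C₁ i, ∃ v₂ ∈ C₂ i,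
        x = concat (cos (η i) • v₁) (sin (η i) • v₂)}, ‖x‖ = 1) ∧
    (∀ x ∈ {x | ∃ i, ∃ v₁ ∈ C₁ i, ∃ v₂ ∈ C₂ i,
        x = concat (cos (η i) • v₁) (sin (η i) • v₂)},
     ∀ y ∈ {x | ∃ i, ∃ v₁ ∈ C₁ i, ∃ v₂ ∈ C₂ i,
        x = concat (cos (η i) • v₁) (sin (η i) • v₂)},
      x ≠ y → d ≤ dist x y) ∧
    {x | ∃ i, ∃ v₁ ∈ C₁ i, ∃ v₂ ∈ C₂ i,
        x = concat (cos (η i) • v₁) (sin (η i) • v₂)}.ncard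
      = ∑ i, (C₁ i).card * (C₂ i).card := by
  -- minimum distance (covering both same-leaf and cross-leaf cases)
  have hdist : ∀ i j, ∀ v₁ ∈ C₁ i, ∀ v₂ ∈ C₂ i, ∀ w₁ ∈ C₁ j, ∀ w₂ ∈ C₂ j,
      concat (cos (η i) • v₁) (sin (η i) • v₂) ≠ concat (cos (η j) • w₁) (sin (η j) • w₂) →
      d ≤ dist (concat (cos (η i) • v₁) (sin (η i) • v₂))
            (concat (cos (η j) • w₁) (sin (η j) • w₂)) := by
    intro i j v₁ hv₁ v₂ hv₂ w₁ hw₁ w₂ hw₂ hne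
    by_cases hij : i = j
    · subst hij
      refine hleaf i v₁ hv₁ v₂ hv₂ w₁ hw₁ w₂ hw₂ ?_
      rintro h
      apply hne
      simp only [Prod.mk.injEq] at h
      rw [h.1, h.2]
    · exact cross_leaf hd (hη i) (hη j) (hsep i j hij)
        (hC₁ i v₁ hv₁) (hC₂ i v₂ hv₂) (hC₁ j w₁ hw₁) (hC₂ j w₂ hw₂)
  refine ⟨?_, ?_, ?_⟩
  · rintro x ⟨i, v₁, hv₁, v₂, hv₂, rfl⟩
    rw [norm_concat, norm_smul, norm_smul, hC₁ i v₁ hv₁, hC₂ i v₂ hv₂]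
    have h1 := Real.sin_sq_add_cos_sq (η i)
    rw [show ‖cos (η i)‖ * 1 = |cos (η i)| by simp [Real.norm_eq_abs],
      show ‖sin (η i)‖ * 1 = |sin (η i)| by simp [Real.norm_eq_abs], sq_abs, sq_abs]
    rw [show cos (η i) ^ 2 + sin (η i) ^ 2 = 1 by linarith]
    exact Real.sqrt_one
  · rintro x ⟨i, v₁, hv₁, v₂, hv₂, rfl⟩ y ⟨j, w₁, hw₁, w₂, hw₂, rfl⟩ hne
    exact hdist i j v₁ hv₁ v₂ hv₂ w₁ hw₁ w₂ hw₂ hne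
  · -- cardinality
    classical
    set g : ι → EuclideanSpace ℝ (Fin n) × EuclideanSpace ℝ (Fin n) →
        WithLp 2 (EuclideanSpace ℝ (Fin n) × EuclideanSpace ℝ (Fin n)) :=
      fun i p => concat (cos (η i) • p.1) (sin (η i) • p.2) with hg
    have hset : {x | ∃ i, ∃ v₁ ∈ C₁ i, ∃ v₂ ∈ C₂ i,
        x = concat (cos (η i) • v₁) (sin (η i) • v₂)} =
        ↑(Finset.univ.biUnion fun i => (C₁ i ×ˢ C₂ i).image (g i)) := by
      ext x
      simp only [Set.mem_setOf_eq, Finset.coe_biUnion, Finset.mem_coe, Finset.mem_biUnion,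
        Finset.mem_univ, true_and, Finset.mem_image, Finset.mem_product, Set.mem_iUnion, hg]
      constructor
      · rintro ⟨i, v₁, hv₁, v₂, hv₂, rfl⟩
        exact ⟨i, trivial, (v₁, v₂), ⟨hv₁, hv₂⟩, rfl⟩
      · rintro ⟨i, -, ⟨v₁, v₂⟩, ⟨hv₁, hv₂⟩, rfl⟩
        exact ⟨i, v₁, hv₁, v₂, hv₂, rfl⟩
    rw [hset, Set.ncard_coe_finset]
    rw [Finset.card_biUnion]
    · refine Finset.sum_congr rfl fun i _ => ?_
      rw [Finset.card_image_of_injOn, Finset.card_product]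
      rintro ⟨v₁, v₂⟩ hp ⟨w₁, w₂⟩ hq heq
      rw [Finset.mem_coe, Finset.mem_product] at hp hq
      by_contra hpq
      have := hleaf i v₁ hp.1 v₂ hp.2 w₁ hq.1 w₂ hq.2 hpq
      rw [hg] at heq
      simp only at heq
      rw [heq] at this
      simp at this
      linarith [hd.1]
    · intro i _ j _ hij
      rw [Function.onFun, Finset.disjoint_left]
      rintro x hx hx'
      rw [Finset.mem_image] at hx hx'
      obtain ⟨⟨v₁, v₂⟩, hp, rfl⟩ := hx
      obtain ⟨⟨w₁, w₂⟩, hq, heq⟩ := hx'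
      rw [Finset.mem_product] at hp hq
      have := cross_leaf hd (hη j) (hη i) (hsep j i (Ne.symm hij))
        (hC₁ j w₁ hq.1) (hC₂ j w₂ hq.2) (hC₁ i v₁ hp.1) (hC₂ i v₂ hp.2)
      rw [hg] at heq
      simp only at heq
      rw [heq] at this
      simp at this
      linarith [hd.1]
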